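/- Let A ⊂ ℝ be a nonempty compact set. Then for every ε > 0 there exists a point x ∈ A such that both dimH(A ∩ (-∞, x]) ≥ dimH(A) - ε and dimH(A ∩ [x, ∞)) ≥ dimH(A) - ε. -/

import Mathlib

open MeasureTheory Set

private lemma dim_left_cont (A : Set ℝ) (t : ENNReal) (c : ℝ)
    (h : ∀ y < c, dimH (A ∩ Set.Iic y) ≤ t) : dimH (A ∩ Set.Iic c) ≤ t := by
  have hsub : A ∩ Set.Iic c ⊆ {c} ∪ ⋃ n : ℕ, A ∩ Set.Iic (c - 1 / (n + 1)) := by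
    rintro x ⟨hxA, hxc⟩
    rcases eq_or_lt_of_le (mem_Iic.mp hxc) with h' | h'
    · exact Or.inl h'
    · obtain ⟨n, hn⟩ := exists_nat_one_div_lt (sub_pos.mpr h')
      refine Or.inr (mem_iUnion.mpr ⟨n, hxA, ?_⟩)
      simp only [mem_Iic, mem_Ici]

      linarith
  calc dimH (A ∩ Set.Iic c) ≤ dimH ({c} ∪ ⋃ n : ℕ, A ∩ Set.Iic (c - 1 / (n + 1))) :=
        dimH_mono hsub
    _ = max (dimH ({c} : Set ℝ)) (dimH (⋃ n : ℕ, A ∩ Set.Iic (c - 1 / (n + 1)))) :=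
        dimH_union _ _
    _ ≤ t := by
        apply max_le
        · rw [dimH_subsingleton subsingleton_singleton]; exact zero_le
        · rw [dimH_iUnion]
          refine iSup_le fun n => h _ ?_
          have : (0:ℝ) < 1 / (n + 1) := by positivity
          linarith

private lemma dim_right_cont (A : Set ℝ) (t : ENNReal) (c : ℝ)
    (h : ∀ y, c < y → dimH (A ∩ Set.Ici y) ≤ t) : dimH (A ∩ Set.Ici c) ≤ t := by
  have hsub : A ∩ Set.Ici c ⊆ {c} ∪ ⋃ n : ℕ, A ∩ Set.Ici (c + 1 / (n + 1)) := by
    rintro x ⟨hxA, hxc⟩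
    rcases eq_or_lt_of_le (mem_Ici.mp hxc) with h' | h'
    · exact Or.inl h'.symm
    · obtain ⟨n, hn⟩ := exists_nat_one_div_lt (sub_pos.mpr h')
      refine Or.inr (mem_iUnion.mpr ⟨n, hxA, ?_⟩)
      simp only [mem_Iic, mem_Ici]

      linarith
  calc dimH (A ∩ Set.Ici c) ≤ dimH ({c} ∪ ⋃ n : ℕ, A ∩ Set.Ici (c + 1 / (n + 1))) :=
        dimH_mono hsub
    _ = max (dimH ({c} : Set ℝ)) (dimH (⋃ n : ℕ, A ∩ Set.Ici (c + 1 / (n + 1)))) :=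
        dimH_union _ _
    _ ≤ t := by
        apply max_le
        · rw [dimH_subsingleton subsingleton_singleton]; exact zero_le
        · rw [dimH_iUnion]
          refine iSup_le fun n => h _ ?_
          have : (0:ℝ) < 1 / (n + 1) := by positivity
          linarith

/-- A nonempty compact set `A ⊆ ℝ` can be split at one of its points into a left part and a
right part, each of Hausdorff dimension at least `dimH A - ε`. -/
theorem stmt_0 (A : Set ℝ) (hA : IsCompact A) (hne : A.Nonempty) :
    ∀ ε : ℝ, 0 < ε → ∃ x ∈ A,
      dimH A - ENNReal.ofReal ε ≤ dimH (A ∩ Set.Iic x) ∧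
      dimH A - ENNReal.ofReal ε ≤ dimH (A ∩ Set.Ici x) := by
  intro ε hε
  set d := dimH A with hd
  set t := d - ENNReal.ofReal ε with ht
  by_cases htriv : d ≤ ENNReal.ofReal ε
  · obtain ⟨x, hx⟩ := hne
    refine ⟨x, hx, ?_, ?_⟩ <;> simp [ht, tsub_eq_zero_of_le htriv]
  push_neg at htriv
  have hd_ne_top : d ≠ ⊤ := by
    refine ne_top_of_le_ne_top ?_ (dimH_mono (subset_univ A))
    rw [Real.dimH_univ]; exact ENNReal.one_ne_top
  have htd : t < d := ENNReal.sub_lt_self hd_ne_top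
    (fun h0 => by simp [h0] at htriv)
    (ne_of_gt (ENNReal.ofReal_pos.mpr hε))
  have ht_pos : 0 < t := tsub_pos_of_lt htriv
  -- splitting identity
  have hsplit : ∀ c : ℝ, d = max (dimH (A ∩ Set.Iic c)) (dimH (A ∩ Set.Ici c)) := by
    intro c
    rw [hd, ← dimH_union]
    congr 1
    rw [← inter_union_distrib_left, Iic_union_Ici, inter_univ]
  -- bounds of A
  obtain ⟨m, hm⟩ := hA.bddBelow
  obtain ⟨M, hM⟩ := hA.bddAbove
  set S : Set ℝ := {x | t < dimH (A ∩ Set.Iic x)} with hS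
  set S' : Set ℝ := {x | t < dimH (A ∩ Set.Ici x)} with hS'
  have hSne : S.Nonempty := by
    refine ⟨M, ?_⟩
    have : A ∩ Set.Iic M = A := inter_eq_left.mpr hM
    simpa [hS, this] using htd
  have hS'ne : S'.Nonempty := by
    refine ⟨m, ?_⟩
    have : A ∩ Set.Ici m = A := inter_eq_left.mpr hm
    simpa [hS', this] using htd
  have hSbdd : BddBelow S := by
    refine ⟨m - 1, fun x hx => ?_⟩
    by_contra hc
    push_neg at hc
    have : A ∩ Set.Iic x = ∅ := by
      ext y; simp only [mem_inter_iff, mem_Iic, mem_empty_iff_false, iff_false]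
      rintro ⟨hyA, hyx⟩
      have := hm hyA; linarith
    rw [hS, mem_setOf_eq, this, dimH_empty] at hx
    exact (ht_pos.trans hx).false
  have hS'bdd : BddAbove S' := by
    refine ⟨M + 1, fun x hx => ?_⟩
    by_contra hc
    push_neg at hc
    have : A ∩ Set.Ici x = ∅ := by
      ext y; simp only [mem_inter_iff, mem_Ici, mem_empty_iff_false, iff_false]
      rintro ⟨hyA, hyx⟩
      have := hM hyA; linarith
    rw [hS', mem_setOf_eq, this, dimH_empty] at hx
    exact (ht_pos.trans hx).false
  set x₁ := sInf S with hx₁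
  set x₂ := sSup S' with hx₂
  -- points strictly below x₁ are not in S, etc.
  have hnotS : ∀ y < x₁, dimH (A ∩ Set.Iic y) ≤ t := by
    intro y hy
    by_contra hc
    push_neg at hc
    exact absurd (csInf_le hSbdd hc) (not_le.mpr hy)
  have hnotS' : ∀ y, x₂ < y → dimH (A ∩ Set.Ici y) ≤ t := by
    intro y hy
    by_contra hc
    push_neg at hc
    exact absurd (le_csSup hS'bdd hc) (not_le.mpr hy)
  have hlt : x₁ < x₂ := by
    by_contra hc
    push_neg at hc  -- x₂ ≤ x₁
    have h1 : dimH (A ∩ Set.Iic x₁) ≤ t := dim_left_cont A t x₁ hnotS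
    have h2 : dimH (A ∩ Set.Ici x₁) ≤ t :=
      dim_right_cont A t x₁ fun y hy => hnotS' y (lt_of_le_of_lt hc hy)
    have : d ≤ t := by rw [hsplit x₁]; exact max_le h1 h2
    exact (this.trans_lt htd).false.elim
  -- A meets (x₁, x₂)
  have hmeets : (A ∩ Set.Ioo x₁ x₂).Nonempty := by
    by_contra hc
    rw [not_nonempty_iff_eq_empty] at hc
    set y := (x₁ + x₂) / 2 with hy
    have hy1 : x₁ < y := by rw [hy]; linarith
    have hy2 : y < x₂ := by rw [hy]; linarith
    have heq : A ∩ Set.Iic y = A ∩ Set.Iic x₁ := by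
      ext z
      simp only [mem_inter_iff, mem_Iic]
      refine ⟨fun ⟨hzA, hzy⟩ => ⟨hzA, ?_⟩, fun ⟨hzA, hz⟩ => ⟨hzA, hz.trans hy1.le⟩⟩
      by_contra hz
      push_neg at hz
      have hmem : z ∈ A ∩ Set.Ioo x₁ x₂ := ⟨hzA, hz, lt_of_le_of_lt hzy hy2⟩
      rw [hc] at hmem
      exact hmem
    have hyS : t < dimH (A ∩ Set.Iic y) := by
      obtain ⟨z, hzS, hzy⟩ := (csInf_lt_iff hSbdd hSne).mp hy1
      exact lt_of_lt_of_le hzS (dimH_mono (inter_subset_inter_right A (Iic_subset_Iic.mpr hzy.le)))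
    rw [heq] at hyS
    exact absurd (dim_left_cont A t x₁ hnotS) (not_le.mpr hyS)
  obtain ⟨x, hxA, hx1, hx2⟩ := hmeets
  refine ⟨x, hxA, ?_, ?_⟩
  · obtain ⟨z, hzS, hzx⟩ := (csInf_lt_iff hSbdd hSne).mp hx1
    exact le_of_lt (lt_of_lt_of_le hzS
      (dimH_mono (inter_subset_inter_right A (Iic_subset_Iic.mpr hzx.le))))
  · obtain ⟨z, hzS, hxz⟩ := (lt_csSup_iff hS'bdd hS'ne).mp hx2
    exact le_of_lt (lt_of_lt_of_le hzS
      (dimH_mono (inter_subset_inter_right A (Ici_subset_Ici.mpr hxz.le))))
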